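/- Let w : ℝ×Λ → ℝ be a measurable function such that x ↦ w(x) − sgn(x₁) m_β is integrable over ℝ×Λ. Then there is exactly one b ∈ ℝ with ∫_{ℝ×Λ} (w(x) − m̄_b(x)) dx = 0, and for every c ∈ ℝ one has |b − c| ≤ (1/(2 m_β L^d)) ∫_{ℝ×Λ} |w(x) − m̄_c(x)| dx. -/

import Mathlib

open MeasureTheory Real Filter Set

noncomputable section

/-- Ambient space `ℝ^{d+1}`; the cylinder `ℝ × Λ` (with `Λ` the `d`-dimensional torus of
side `L`) is encoded as `ℝ^{d+1}` together with `L`-periodicity in the coordinates `i ≠ 0`. -/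
abbrev Amb (d : ℕ) := EuclideanSpace ℝ (Fin (d + 1))

/-- Fundamental domain of the cylinder `ℝ × Λ`. -/
def cylDom (d : ℕ) (L : ℝ) : Set (Amb d) :=
  {x | ∀ i : Fin (d + 1), i ≠ 0 → x i ∈ Set.Ico (0 : ℝ) L}

/-- Periodicity (period `L`) in each transverse direction. -/
def CylPeriodic (d : ℕ) (L : ℝ) (u : Amb d → ℝ) : Prop :=
  ∀ (x : Amb d) (i : Fin (d + 1)), i ≠ 0 → u (x + EuclideanSpace.single i L) = u x

/-- Convolution (computed on the universal cover `ℝ^{d+1}`, which agrees with the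
cylinder convolution by periodization of the kernel). -/
def conv {d : ℕ} (J u : Amb d → ℝ) : Amb d → ℝ := fun x => ∫ y, J (x - y) * u y

/-- Square of the `L²(ℝ×Λ)` norm. -/
def l2sq (d : ℕ) (L : ℝ) (u : Amb d → ℝ) : ℝ := ∫ x in cylDom d L, (u x) ^ 2

/-- `L¹(ℝ×Λ)` norm. -/
def l1norm (d : ℕ) (L : ℝ) (u : Amb d → ℝ) : ℝ := ∫ x in cylDom d L, |u x|

/-- Square of the `L²(ℝ×Λ)` norm of the gradient. -/
def gradl2sq (d : ℕ) (L : ℝ) (u : Amb d → ℝ) : ℝ :=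
  ∫ x in cylDom d L, ‖gradient u x‖ ^ 2

/-- Sobolev `W^{s,2}(ℝ×Λ)` norm. -/
def sobNorm (d : ℕ) (L : ℝ) (s : ℕ) (u : Amb d → ℝ) : ℝ :=
  ∑ j ∈ Finset.range (s + 1),
    (∫ x in cylDom d L, ‖iteratedFDeriv ℝ j u x‖ ^ 2) ^ (1 / 2 : ℝ)

/-- The mobility `σ(m) = β (1 - m²)`. -/
def mob (β m : ℝ) : ℝ := β * (1 - m ^ 2)

/-- Inverse hyperbolic tangent. -/
def atanh (x : ℝ) : ℝ := (1 / 2) * Real.log ((1 + x) / (1 - x))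

/-- The double-well potential. -/
def fpot (β m : ℝ) : ℝ :=
  -m ^ 2 / 2 + (1 / β) * (((1 + m) / 2) * Real.log ((1 + m) / 2)
    + ((1 - m) / 2) * Real.log ((1 - m) / 2))

/-- Partial derivative in the `i`-th coordinate direction. -/
def pd {d : ℕ} (i : Fin (d + 1)) (u : Amb d → ℝ) : Amb d → ℝ :=
  fun x => fderiv ℝ u x (EuclideanSpace.single i 1)

/-- Divergence of a vector field. -/
def divg {d : ℕ} (F : Amb d → Amb d) : Amb d → ℝ :=
  fun x => ∑ i : Fin (d + 1), fderiv ℝ (fun y => F y i) x (EuclideanSpace.single i 1)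

/-- The Laplacian. -/
def lapl (d : ℕ) (u : Amb d → ℝ) : Amb d → ℝ :=
  fun x => ∑ i : Fin (d + 1), pd i (pd i u) x

/-- Squared `L²(ℝ×Λ)` norm of `(-Δ)^{j/2} u`: for even `j` it is `‖Δ^{j/2}u‖₂²`,
for odd `j` it is `‖∇ Δ^{(j-1)/2} u‖₂²`. -/
def fracSq (d : ℕ) (L : ℝ) (j : ℕ) (u : Amb d → ℝ) : ℝ :=
  if j % 2 = 0 then ∫ x in cylDom d L, ((lapl d)^[j / 2] u x) ^ 2
  else ∫ x in cylDom d L, ‖gradient ((lapl d)^[j / 2] u) x‖ ^ 2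

/-- The point of the cylinder with longitudinal coordinate `x₁` and transverse
coordinate `y`. -/
def emb (d : ℕ) (x₁ : ℝ) (y : EuclideanSpace ℝ (Fin d)) : Amb d :=
  (EuclideanSpace.equiv (Fin (d + 1)) ℝ).symm (Fin.cons x₁ (fun j => y j))

/-- Fundamental domain of the torus `Λ`. -/
def transDom (d : ℕ) (L : ℝ) : Set (EuclideanSpace ℝ (Fin d)) :=
  {y | ∀ j : Fin d, y j ∈ Set.Ico (0 : ℝ) L}

/-- Transverse mean `v₁(x₁) = L^{-d} ∫_Λ v(x₁, x^⊥) dx^⊥`. -/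
def transMean (d : ℕ) (L : ℝ) (v : Amb d → ℝ) (x₁ : ℝ) : ℝ :=
  (1 / L ^ d) * ∫ y in transDom d L, v (emb d x₁ y)

/-- The data of the problem: dimension `D = d+1`, torus side `L > 0`, inverse
temperature `β > 1`, interaction kernel `J` (a smooth, spherically symmetric,
compactly supported probability density), the equilibrium magnetization `m_β`
(the positive solution of `m = tanh (β m)`), and the instanton `m̄₀` (denoted `mb`),
with its standard properties. -/
structure Setting (d : ℕ) where
  L : ℝ
  hL : 0 < L
  β : ℝ
  hβ : 1 < β
  J : Amb d → ℝ
  hJsmooth : ∀ n : ℕ, ContDiff ℝ n J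
  hJcompact : HasCompactSupport J
  hJnonneg : ∀ x, 0 ≤ J x
  hJprob : (∫ x, J x) = 1
  hJradial : ∀ x y : Amb d, ‖x‖ = ‖y‖ → J x = J y
  mβ : ℝ
  hmβ0 : 0 < mβ
  hmβ1 : mβ < 1
  hmβtanh : mβ = Real.tanh (β * mβ)
  mb : ℝ → ℝ
  hmb_smooth : ∀ n : ℕ, ContDiff ℝ n mb
  hmb_odd : ∀ x, mb (-x) = -mb x
  hmb_mono : StrictMono mb
  hmb_range : ∀ x, mb x ∈ Set.Ioo (-mβ) mβ
  hmb_top : Tendsto mb atTop (nhds mβ)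
  hmb_bot : Tendsto mb atBot (nhds (-mβ))
  hmb_euler : ∀ x₁ : ℝ, (1 / β) * atanh (mb x₁)
      = ∫ y : Amb d, J (EuclideanSpace.single (0 : Fin (d + 1)) x₁ - y) * mb (y 0)
  Cm : ℝ
  αm : ℝ
  hCm : 0 < Cm
  hαm : 0 < αm
  hmb_exp1 : ∀ x : ℝ, 0 < mβ ^ 2 - mb x ^ 2 ∧ mβ ^ 2 - mb x ^ 2 ≤ Cm * Real.exp (-αm * |x|)
  hmb_exp2 : ∀ x : ℝ, 0 < deriv mb x ∧ deriv mb x ≤ Cm * Real.exp (-αm * |x|)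
  hmb_exp3 : ∀ x : ℝ, |deriv (deriv mb) x| ≤ Cm * Real.exp (-αm * |x|)

variable {d : ℕ}

/-- The planar front `m̄_a`. -/
def instanton (S : Setting d) (a : ℝ) : Amb d → ℝ := fun x => S.mb (x 0 - a)

/-- `m̄_a' = ∂_{x₁} m̄_a`. -/
def instantonD (S : Setting d) (a : ℝ) : Amb d → ℝ := fun x => deriv S.mb (x 0 - a)

/-- The second variation of the free energy at `m̄_a`:
`B_a v = v/(β(1-m̄_a²)) - J⋆v`. -/
def Bop (S : Setting d) (a : ℝ) (v : Amb d → ℝ) : Amb d → ℝ :=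
  fun x => v x / (S.β * (1 - S.mb (x 0 - a) ^ 2)) - conv S.J v x

/-- The one-dimensional operator `A_a v = v/(β(1-m̄_a²)) - J̄⋆v`. -/
def Aop (S : Setting d) (a : ℝ) (v : ℝ → ℝ) : ℝ → ℝ :=
  fun x₁ => v x₁ / (S.β * (1 - S.mb (x₁ - a) ^ 2))
    - ∫ y : Amb d, S.J (EuclideanSpace.single (0 : Fin (d + 1)) x₁ - y) * v (y 0)

/-- The Gates–Penrose–Lebowitz free energy. -/
def freeEnergy (S : Setting d) (m : Amb d → ℝ) : ℝ :=
  (∫ x in cylDom d S.L, (fpot S.β (m x) - fpot S.β S.mβ))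
  + (1 / 4) * ∫ x in cylDom d S.L, ∫ y, S.J (x - y) * (m x - m y) ^ 2

/-- Finiteness of the free energy. -/
def FreeEnergyFinite (S : Setting d) (m : Amb d → ℝ) : Prop :=
  IntegrableOn (fun x => fpot S.β (m x) - fpot S.β S.mβ) (cylDom d S.L) ∧
  IntegrableOn (fun x => ∫ y, S.J (x - y) * (m x - m y) ^ 2) (cylDom d S.L)

/-- The dissipation functional
`I(m) = ∫ σ(m) |∇(β⁻¹ arctanh m - J⋆m)|² dx`. -/
def dissip (S : Setting d) (m : Amb d → ℝ) : ℝ :=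
  ∫ x in cylDom d S.L,
    mob S.β (m x) * ‖gradient (fun y => (1 / S.β) * atanh (m y) - conv S.J m y) x‖ ^ 2

/-- Right-hand side of the evolution equation `∂m/∂t = ∇·(∇m - β(1-m²) J⋆∇m)`. -/
def evolRhs (S : Setting d) (m : Amb d → ℝ) : Amb d → ℝ :=
  divg (fun y => gradient m y
    - (S.β * (1 - m y ^ 2)) • (∫ z, S.J (y - z) • gradient m z))

/-- `m` is a classical solution of the evolution equation on the cylinder, taking
values in `[-1,1]`, periodic, with square-integrable gradient for positive times. -/
def IsSolution (S : Setting d) (m : ℝ → Amb d → ℝ) : Prop :=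
  (∀ t, CylPeriodic d S.L (m t)) ∧
  (∀ t x, m t x ∈ Set.Icc (-1 : ℝ) 1) ∧
  (∀ t x, HasDerivAt (fun s => m s x) (evolRhs S (m t) x) t) ∧
  (∀ t, 0 < t → IntegrableOn (fun x => ‖gradient (m t) x‖ ^ 2) (cylDom d S.L))

/-- `a` is the (assumed unique) minimizer of `b ↦ ‖m(t) - m̄_b‖₂`. -/
def IsShift (S : Setting d) (m : ℝ → Amb d → ℝ) (a : ℝ → ℝ) : Prop :=
  ∀ t b, l2sq d S.L (fun x => m t x - instanton S (a t) x)
    ≤ l2sq d S.L (fun x => m t x - instanton S b x)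

/-- `v(t) = m(t) - m̄_{a(t)}`. -/
def vsel (S : Setting d) (m : ℝ → Amb d → ℝ) (a : ℝ → ℝ) (t : ℝ) : Amb d → ℝ :=
  fun x => m t x - instanton S (a t) x

/-- The spectral gap of `B_a` on the orthogonal complement of `m̄_a'`. -/
def SpectralGap (S : Setting d) (γ : ℝ) : Prop :=
  ∀ (a : ℝ) (v : Amb d → ℝ), Measurable v →
    IntegrableOn (fun x => v x ^ 2) (cylDom d S.L) →
    (∫ x in cylDom d S.L, v x * instantonD S a x) = 0 →
    γ * l2sq d S.L v ≤ ∫ x in cylDom d S.L, Bop S a v x * v x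

/-! ### Auxiliary lemmas for `stmt11` -/

section Stmt11Aux

lemma measurable_realSign : Measurable Real.sign := by
  have : Real.sign = fun r : ℝ => if r < 0 then (-1:ℝ) else if 0 < r then 1 else 0 := rfl
  rw [this]
  exact Measurable.ite measurableSet_Iio measurable_const
    (Measurable.ite measurableSet_Ioi measurable_const measurable_const)

lemma integrable_exp_neg_mul_abs' {a : ℝ} (ha : 0 < a) :
    Integrable (fun x : ℝ => Real.exp (-a * |x|)) := by
  have h1 : IntegrableOn (fun x : ℝ => Real.exp (-a * |x|)) (Ici 0) := by
    have h0 : IntegrableOn (fun x : ℝ => Real.exp (-a * x)) (Ici 0) := by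
      rw [integrableOn_Ici_iff_integrableOn_Ioi]
      exact exp_neg_integrableOn_Ioi 0 ha
    exact h0.congr_fun (fun x hx => by rw [abs_of_nonneg hx]) measurableSet_Ici
  have h2 : IntegrableOn (fun x : ℝ => Real.exp (-a * |x|)) (Iic 0) := by
    have hneg : MeasurePreserving (Neg.neg : ℝ → ℝ) volume volume :=
      Measure.measurePreserving_neg volume
    have hemb : MeasurableEmbedding (Neg.neg : ℝ → ℝ) :=
      (Homeomorph.neg ℝ).measurableEmbedding
    have := (hneg.integrableOn_comp_preimage hemb
      (f := fun x : ℝ => Real.exp (-a * |x|)) (s := Ici 0)).2 h1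
    have hset : (Neg.neg : ℝ → ℝ) ⁻¹' Ici 0 = Iic 0 := by ext x; simp
    rw [hset] at this
    exact this.congr_fun (fun x hx => by simp [Function.comp, abs_neg]) measurableSet_Iic
  have : IntegrableOn (fun x : ℝ => Real.exp (-a * |x|)) (Iic 0 ∪ Ioi 0) :=
    h2.union (h1.mono_set Ioi_subset_Ici_self)
  rwa [Iic_union_Ioi, integrableOn_univ] at this

lemma signDiff (h : ℝ) (hh : 0 ≤ h) :
    Integrable (fun x : ℝ => Real.sign x - Real.sign (x - h)) ∧
    ∫ x : ℝ, (Real.sign x - Real.sign (x - h)) = 2 * h := by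
  have hae : (fun x : ℝ => Real.sign x - Real.sign (x - h)) =ᵐ[volume]
      Set.indicator (Set.Ioc 0 h) (fun _ => (2:ℝ)) := by
    have hcnt : ∀ᵐ x : ℝ, x ∉ ({0, h} : Set ℝ) :=
      (((Set.finite_singleton h).insert 0).countable).ae_notMem _
    filter_upwards [hcnt] with x hx
    have hx0 : x ≠ 0 := fun h' => hx (by simp [h'])
    have hxh : x ≠ h := fun h' => hx (by simp [h'])
    rcases hx0.lt_or_gt with h1 | h1
    · rw [Real.sign_of_neg h1, Real.sign_of_neg (by linarith : x - h < 0),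
        Set.indicator_of_notMem (by simp only [Set.mem_Ioc, not_and, not_le]; intro h2; linarith)]
      ring
    · rcases hxh.lt_or_gt with h2 | h2
      · rw [Real.sign_of_pos h1, Real.sign_of_neg (by linarith : x - h < 0),
          Set.indicator_of_mem (Set.mem_Ioc.mpr ⟨h1, h2.le⟩)]
        ring
      · rw [Real.sign_of_pos h1, Real.sign_of_pos (by linarith : 0 < x - h),
          Set.indicator_of_notMem (by simp only [Set.mem_Ioc, not_and, not_le]; intro h3; linarith)]
        ring
  have hEint : Integrable (Set.indicator (Set.Ioc 0 h) (fun _ => (2:ℝ))) := by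
    rw [integrable_indicator_iff measurableSet_Ioc]
    exact integrableOn_const (by rw [Real.volume_Ioc]; exact ENNReal.ofReal_ne_top)
  constructor
  · exact hEint.congr hae.symm
  · rw [integral_congr_ae hae, integral_indicator_const _ measurableSet_Ioc,
      Real.volume_real_Ioc, max_eq_left (by linarith : (0:ℝ) ≤ h - 0)]
    simp; ring

variable {d : ℕ}

lemma Setting.mb_zero (S : Setting d) : S.mb 0 = 0 := by
  have := S.hmb_odd 0
  simp only [neg_zero] at this
  linarith

/-- The tail `m̄₀ − sgn · m_β` is integrable on `ℝ`. -/
lemma Setting.phi_integrable (S : Setting d) :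
    Integrable (fun x : ℝ => S.mb x - Real.sign x * S.mβ) := by
  have hbound : ∀ x : ℝ, |S.mb x - Real.sign x * S.mβ|
      ≤ (S.Cm / S.mβ) * Real.exp (-S.αm * |x|) := by
    have key : ∀ x : ℝ, 0 ≤ x → |S.mb x - Real.sign x * S.mβ|
        ≤ (S.Cm / S.mβ) * Real.exp (-S.αm * |x|) := by
      intro x hx
      rcases eq_or_lt_of_le hx with hx0 | hx0
      · rw [← hx0, S.mb_zero, Real.sign_zero]
        have : (0:ℝ) < (S.Cm / S.mβ) * Real.exp (-S.αm * |(0:ℝ)|) :=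
          mul_pos (div_pos S.hCm S.hmβ0) (Real.exp_pos _)
        simpa using this.le
      · have hmb0 : 0 ≤ S.mb x := by
          have := S.hmb_mono.monotone hx
          rwa [S.mb_zero] at this
        have hmblt : S.mb x < S.mβ := (S.hmb_range x).2
        have hexp := (S.hmb_exp1 x).2
        rw [Real.sign_of_pos hx0]
        rw [abs_of_nonpos (by nlinarith [S.hmβ0] : S.mb x - 1 * S.mβ ≤ 0)]
        rw [div_mul_eq_mul_div, le_div_iff₀ S.hmβ0]
        nlinarith [Real.exp_pos (-S.αm * |x|), S.hmβ0]
    intro x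
    rcases le_or_gt 0 x with hx | hx
    · exact key x hx
    · have h1 := key (-x) (by linarith)
      have e1 : S.mb (-x) - Real.sign (-x) * S.mβ = -(S.mb x - Real.sign x * S.mβ) := by
        rw [S.hmb_odd, Real.sign_neg]; ring
      rw [e1, abs_neg, abs_neg] at h1
      exact h1
  have hmeas : Measurable fun x : ℝ => S.mb x - Real.sign x * S.mβ :=
    ((S.hmb_smooth 0).continuous.measurable).sub (measurable_realSign.mul_const _)
  refine Integrable.mono' ((integrable_exp_neg_mul_abs' S.hαm).const_mul (S.Cm / S.mβ))
    hmeas.aestronglyMeasurable (Eventually.of_forall fun x => ?_)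
  simpa [Real.norm_eq_abs] using hbound x

/-- `∫ (m̄₀(x) − m̄₀(x−h)) dx = 2 m_β h`, with integrability. -/
lemma Setting.psi (S : Setting d) (h : ℝ) :
    Integrable (fun x : ℝ => S.mb x - S.mb (x - h)) ∧
    ∫ x : ℝ, (S.mb x - S.mb (x - h)) = 2 * S.mβ * h := by
  have main : ∀ h : ℝ, 0 ≤ h → Integrable (fun x : ℝ => S.mb x - S.mb (x - h)) ∧
      ∫ x : ℝ, (S.mb x - S.mb (x - h)) = 2 * S.mβ * h := by
    intro h hh
    have hsd := signDiff h hh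
    have hdecomp : (fun x : ℝ => S.mb x - S.mb (x - h))
        = fun x : ℝ => ((S.mb x - Real.sign x * S.mβ)
            - (S.mb (x - h) - Real.sign (x - h) * S.mβ))
          + (Real.sign x - Real.sign (x - h)) * S.mβ := by
      funext x; ring
    have hg' : Integrable (fun x : ℝ => S.mb (x - h) - Real.sign (x - h) * S.mβ) :=
      S.phi_integrable.comp_sub_right h
    have hφs : Integrable (fun x : ℝ => (S.mb x - Real.sign x * S.mβ)
        - (S.mb (x - h) - Real.sign (x - h) * S.mβ)) := S.phi_integrable.sub hg'
    have hsm : Integrable (fun x : ℝ => (Real.sign x - Real.sign (x - h)) * S.mβ) :=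
      hsd.1.mul_const _
    constructor
    · rw [hdecomp]; exact hφs.add hsm
    · rw [hdecomp, integral_add hφs hsm,
        integral_sub S.phi_integrable hg',
        integral_sub_right_eq_self (fun x : ℝ => S.mb x - Real.sign x * S.mβ) h,
        integral_mul_const, hsd.2]
      ring
  rcases le_or_gt 0 h with hh | hh
  · exact main h hh
  · obtain ⟨hint', hval'⟩ := main (-h) (by linarith)
    have hptw : ∀ x : ℝ, S.mb x - S.mb (x - h) = -(S.mb (-x) - S.mb (-x - -h)) := by
      intro x
      have e1 : -x - -h = -(x - h) := by ring
      rw [e1, S.hmb_odd, S.hmb_odd]; ring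
    have h3 := integral_neg_eq_self (fun y : ℝ => S.mb y - S.mb (y - -h)) volume
    constructor
    · have : (fun x : ℝ => S.mb x - S.mb (x - h))
          = fun x : ℝ => -((fun y : ℝ => S.mb y - S.mb (y - -h)) (-x)) := by
        funext x; exact hptw x
      rw [this]; exact (hint'.comp_neg).neg
    · have h2 : (∫ x : ℝ, (S.mb x - S.mb (x - h)))
          = ∫ x : ℝ, -(S.mb (-x) - S.mb (-x - -h)) := by
        congr 1; funext x; exact hptw x
      rw [h2, integral_neg, h3, hval']; ring

/-- Integrability of `m̄_b − sgn · m_β` on `ℝ`. -/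
lemma Setting.instanton_tail_integrable (S : Setting d) (b : ℝ) :
    Integrable (fun t : ℝ => S.mb (t - b) - Real.sign t * S.mβ) := by
  have : (fun t : ℝ => S.mb (t - b) - Real.sign t * S.mβ)
      = fun t : ℝ => (S.mb t - Real.sign t * S.mβ) - (S.mb t - S.mb (t - b)) := by
    funext t; ring
  rw [this]
  exact S.phi_integrable.sub (S.psi b).1

/-- The instanton-difference integral on `ℝ`. -/
lemma Setting.instanton_diff (S : Setting d) (b c : ℝ) :
    Integrable (fun t : ℝ => S.mb (t - c) - S.mb (t - b)) ∧
    ∫ t : ℝ, (S.mb (t - c) - S.mb (t - b)) = 2 * S.mβ * (b - c) := by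
  have hdecomp : (fun t : ℝ => S.mb (t - c) - S.mb (t - b))
      = fun t : ℝ => (S.mb t - S.mb (t - b)) - (S.mb t - S.mb (t - c)) := by
    funext t; ring
  constructor
  · rw [hdecomp]; exact (S.psi b).1.sub (S.psi c).1
  · rw [hdecomp, integral_sub (S.psi b).1 (S.psi c).1, (S.psi b).2, (S.psi c).2]; ring

end Stmt11Aux

section CylTransfer

/-- Transfer of integrals of functions of the first coordinate from the cylinder
fundamental domain to the real line. -/
lemma cyl_transfer (d : ℕ) {L : ℝ} (hL : 0 < L) (f : ℝ → ℝ) (hf : Integrable f) :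
    IntegrableOn (fun x : Amb d => f (x 0)) (cylDom d L) ∧
    ∫ x in cylDom d L, f (x 0) = L ^ d * ∫ t, f t := by
  classical
  -- Step 1: transfer to the pi type
  set e1 : (Fin (d+1) → ℝ) ≃ᵐ Amb d := MeasurableEquiv.toLp 2 (Fin (d+1) → ℝ)
  have hmp1 : MeasurePreserving e1 volume volume :=
    (EuclideanSpace.volume_preserving_symm_measurableEquiv_toLp _).symm
  have hemb1 : MeasurableEmbedding e1 := e1.measurableEmbedding
  set S₁ : Set (Fin (d+1) → ℝ) := {x | ∀ i : Fin (d+1), i ≠ 0 → x i ∈ Set.Ico (0:ℝ) L}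
  have hpre1 : e1 ⁻¹' (cylDom d L) = S₁ := rfl
  have hcomp1 : (fun x : Amb d => f (x 0)) ∘ e1 = fun x : Fin (d+1) → ℝ => f (x 0) := rfl
  -- Step 2: transfer to the product type
  set e2 : ℝ × (Fin d → ℝ) ≃ᵐ (Fin (d+1) → ℝ) :=
    (MeasurableEquiv.piFinSuccAbove (fun _ : Fin (d+1) => ℝ) 0).symm
  have hmp2 : MeasurePreserving e2 volume volume :=
    (volume_preserving_piFinSuccAbove (fun _ : Fin (d+1) => ℝ) 0).symm
  have hemb2 : MeasurableEmbedding e2 := e2.measurableEmbedding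
  have he2app : ∀ p : ℝ × (Fin d → ℝ), e2 p = Fin.insertNth 0 p.1 p.2 := fun p => rfl
  set B : Set (Fin d → ℝ) := Set.univ.pi fun _ : Fin d => Set.Ico (0:ℝ) L
  have hpre2 : e2 ⁻¹' S₁ = (Set.univ : Set ℝ) ×ˢ B := by
    ext p
    simp only [Set.mem_preimage, Set.mem_prod, Set.mem_univ, true_and, S₁, Set.mem_setOf_eq,
      he2app, B, Set.mem_pi]
    constructor
    · intro hp j _
      have := hp ((0 : Fin (d+1)).succAbove j) (Fin.succAbove_ne 0 j)
      rwa [Fin.insertNth_apply_succAbove] at this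
    · intro hp i hi
      obtain ⟨j, rfl⟩ : ∃ j : Fin d, (0 : Fin (d+1)).succAbove j = i := by
        refine ⟨i.pred hi, ?_⟩
        rw [Fin.succAbove_zero, Fin.succ_pred]
      rw [Fin.insertNth_apply_succAbove]
      exact hp j trivial
  have hcomp2 : (fun x : Fin (d+1) → ℝ => f (x 0)) ∘ e2 = fun p : ℝ × (Fin d → ℝ) => f p.1 := by
    funext p
    simp only [Function.comp_apply, he2app, Fin.insertNth_apply_same]
  -- Step 3: compute on the product type
  have hBmeas : MeasurableSet B := MeasurableSet.univ_pi fun _ => measurableSet_Ico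
  have hBvol : volume B = ENNReal.ofReal L ^ d := by
    rw [volume_pi_pi]
    simp [Real.volume_Ico]
  have hBfin : volume B < ⊤ := by
    rw [hBvol]; exact ENNReal.pow_lt_top ENNReal.ofReal_lt_top
  have hprod_int : IntegrableOn (fun p : ℝ × (Fin d → ℝ) => f p.1) (Set.univ ×ˢ B) := by
    rw [IntegrableOn, Measure.volume_eq_prod, ← Measure.prod_restrict]
    have hf' : Integrable f (volume.restrict (Set.univ : Set ℝ)) := by
      rwa [Measure.restrict_univ]
    have hone : Integrable (fun _ : Fin d → ℝ => (1:ℝ)) (volume.restrict B) :=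
      integrableOn_const hBfin.ne
    have h1 := hf'.mul_prod hone
    simpa using h1
  have hprod_val : ∫ p in (Set.univ : Set ℝ) ×ˢ B, f p.1 = L ^ d * ∫ t, f t := by
    have h1 := setIntegral_prod_mul (μ := (volume : Measure ℝ))
      (ν := (volume : Measure (Fin d → ℝ))) f (fun _ => (1:ℝ)) Set.univ B
    simp only [mul_one] at h1
    rw [Measure.volume_eq_prod, h1, Measure.restrict_univ, setIntegral_const, smul_eq_mul, mul_one,
      measureReal_def, hBvol]
    rw [ENNReal.toReal_pow, ENNReal.toReal_ofReal hL.le]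
    ring
  -- Assemble
  constructor
  · have := (hmp1.integrableOn_comp_preimage hemb1
      (f := fun x : Amb d => f (x 0)) (s := cylDom d L))
    rw [hpre1, hcomp1] at this
    rw [← this]
    have := (hmp2.integrableOn_comp_preimage hemb2
      (f := fun x : Fin (d+1) → ℝ => f (x 0)) (s := S₁))
    rw [hpre2, hcomp2] at this
    rw [← this]
    exact hprod_int
  · have h1 : (∫ x : (Fin (d+1) → ℝ) in S₁, f (x 0)) = ∫ y in cylDom d L, f (y 0) := by
      have := hmp1.setIntegral_preimage_emb hemb1 (fun x : Amb d => f (x 0)) (cylDom d L)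
      rw [hpre1] at this; exact this
    have h2 : (∫ p in (Set.univ : Set ℝ) ×ˢ B, f (e2 p 0)) = ∫ y : (Fin (d+1) → ℝ) in S₁, f (y 0) := by
      have := hmp2.setIntegral_preimage_emb hemb2 (fun x : Fin (d+1) → ℝ => f (x 0)) S₁
      rw [hpre2] at this; exact this
    rw [← h1, ← h2]
    calc ∫ p in (Set.univ : Set ℝ) ×ˢ B, f (e2 p 0)
        = ∫ p in (Set.univ : Set ℝ) ×ˢ B, f p.1 := by
          refine setIntegral_congr_fun (MeasurableSet.univ.prod hBmeas) fun p _ => ?_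
          rw [he2app, Fin.insertNth_apply_same]
      _ = L ^ d * ∫ t, f t := hprod_val

end CylTransfer
/-- **Selection of the front by the conservation law.** If `w − sgn(x₁) m_β` is integrable
on the cylinder, there is exactly one `b` with `∫ (w − m̄_b) = 0`, and for every `c`,
`|b − c| ≤ (2 m_β L^d)⁻¹ ∫ |w − m̄_c|`. -/
theorem stmt11 (d : ℕ) (S : Setting d) (w : Amb d → ℝ) (hw : Measurable w)
    (hint : IntegrableOn (fun x => w x - Real.sign (x 0) * S.mβ) (cylDom d S.L)) :
    (∃! b : ℝ, (∫ x in cylDom d S.L, (w x - instanton S b x)) = 0) ∧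
    ∀ b c : ℝ, (∫ x in cylDom d S.L, (w x - instanton S b x)) = 0 →
      |b - c| ≤ (1 / (2 * S.mβ * S.L ^ d)) *
        ∫ x in cylDom d S.L, |w x - instanton S c x| := by
  have hL := S.hL
  have hK0 : 0 < 2 * S.mβ * S.L ^ d := by
    have := S.hmβ0; positivity
  -- integrability of `w - m̄_b` for every b
  have hIb : ∀ b : ℝ, IntegrableOn (fun x : Amb d => w x - instanton S b x) (cylDom d S.L) := by
    intro b
    have h1 : IntegrableOn (fun x : Amb d => S.mb (x 0 - b) - Real.sign (x 0) * S.mβ)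
        (cylDom d S.L) := (cyl_transfer d hL _ (S.instanton_tail_integrable b)).1
    have heq : (fun x : Amb d => w x - instanton S b x)
        = fun x => (w x - Real.sign (x 0) * S.mβ)
          - (S.mb (x 0 - b) - Real.sign (x 0) * S.mβ) := by
      funext x; simp only [instanton]; ring
    rw [heq]
    exact hint.sub h1
  -- the key affine identity for F(b) := ∫ (w - m̄_b)
  have hkey : ∀ b c : ℝ, (∫ x in cylDom d S.L, (w x - instanton S b x))
      = (∫ x in cylDom d S.L, (w x - instanton S c x)) + (2 * S.mβ * S.L ^ d) * (b - c) := by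
    intro b c
    obtain ⟨hgint, hgval⟩ := S.instanton_diff b c
    obtain ⟨hgon, hgI⟩ := cyl_transfer d hL _ hgint
    have heq : (fun x : Amb d => w x - instanton S b x)
        = fun x => (w x - instanton S c x) + (S.mb (x 0 - c) - S.mb (x 0 - b)) := by
      funext x; simp only [instanton]; ring
    rw [heq, integral_add (hIb c) hgon, hgI, hgval]
    ring
  refine ⟨⟨-(∫ x in cylDom d S.L, (w x - instanton S 0 x)) / (2 * S.mβ * S.L ^ d), ?_, ?_⟩, ?_⟩
  · beta_reduce
    rw [hkey (-(∫ x in cylDom d S.L, (w x - instanton S 0 x)) / (2 * S.mβ * S.L ^ d)) 0]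
    have hm0 := S.hmβ0.ne'
    field_simp
    ring
  · intro b hb
    have h1 := hkey b 0
    rw [hb] at h1
    have hm0 := S.hmβ0.ne'
    field_simp
    linarith
  · intro b c hb
    have h1 := hkey b c
    rw [hb] at h1
    have habs : |∫ x in cylDom d S.L, (w x - instanton S c x)|
        ≤ ∫ x in cylDom d S.L, |w x - instanton S c x| := by
      have := norm_integral_le_integral_norm (μ := volume.restrict (cylDom d S.L))
        (fun x : Amb d => w x - instanton S c x)
      simpa [Real.norm_eq_abs] using this
    have hbc : (2 * S.mβ * S.L ^ d) * |b - c|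
        = |∫ x in cylDom d S.L, (w x - instanton S c x)| := by
      have h2 : (∫ x in cylDom d S.L, (w x - instanton S c x))
          = -((2 * S.mβ * S.L ^ d) * (b - c)) := by linarith
      rw [h2, abs_neg, abs_mul, abs_of_pos hK0]
    rw [one_div, inv_mul_eq_div, le_div_iff₀ hK0]
    linarith
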